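/- For every permutation σ of {1,…,n} and every position m ∈ {1,…,n}, one has σ(RPW(S'(σ))(m)) = RPW(R(σ))(m); that is, σ is given in two-line notation by top row RPW(S'(σ)) and bottom row RPW(R(σ)). -/

import Mathlib

/-- One step of Patience Sorting: place card `c` on the leftmost pile whose top
(head) is larger than `c`, or start a new pile on the right.  Piles are stored
top-first, so each pile is an increasing list whose head is the top (smallest) card. -/
def PSinsert (c : ℕ) : List (List ℕ) → List (List ℕ)
  | [] => [[c]]
  | [] :: ps => [] :: PSinsert c ps
  | (x :: p) :: ps =>
      if c < x then (c :: x :: p) :: ps else (x :: p) :: PSinsert c ps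

/-- The pile configuration `R(w)` produced by Patience Sorting applied to the word `w`. -/
def PSpiles (w : List ℕ) : List (List ℕ) :=
  w.foldl (fun ps c => PSinsert c ps) []

/-- The one-line word (with values `1,…,n`) of a permutation of `Fin n`. -/
def permWord {n : ℕ} (σ : Equiv.Perm (Fin n)) : List ℕ :=
  List.ofFn fun i => (σ i : ℕ) + 1

/-- The recording piles `S(w)` of Extended Patience Sorting: the `j`-th recording pile is
the set of (1-based) positions `i` whose value `w(i)` lies in the `j`-th insertion pile,
listed in increasing order from top to bottom (so, like the insertion piles, each
recording pile is stored top-first as an increasing list). -/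
def Spiles (w : List ℕ) : List (List ℕ) :=
  (PSpiles w).map fun p =>
    (List.range' 1 w.length).filter (fun i => decide (w.getD (i - 1) 0 ∈ p))

/-- The reverse patience word of a pile configuration: concatenate the piles
left to right, each pile written in decreasing order (bottom to top). -/
def RPW (P : List (List ℕ)) : List ℕ := (P.map List.reverse).flatten

lemma filter_map_aux {α β : Type*} (f : α → β) (P : β → Bool) (l : List α) :
    (l.filter (fun a => P (f a))).map f = (l.map f).filter P := by
  induction l with
  | nil => simp
  | cons a l ih => by_cases h : P (f a) <;> simp [h, ih]

lemma range'_map_getD (l : List ℕ) :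
    (List.range' 1 l.length).map (fun i => l.getD (i - 1) 0) = l := by
  apply List.ext_getElem
  · simp
  · intro i h1 h2
    simp only [List.getElem_map, List.getElem_range']
    rw [List.getD_eq_getElem]
    · congr 1; omega
    · simpa using h2

lemma mem_of_inv {w : List ℕ} {p : List ℕ}
    (h : w.filter (fun x => decide (x ∈ p)) = p.reverse) : ∀ x ∈ p, x ∈ w := by
  intro x hx
  have : x ∈ p.reverse := List.mem_reverse.mpr hx
  rw [← h] at this
  exact (List.mem_filter.mp this).1

lemma unchanged {w : List ℕ} {p : List ℕ} {c : ℕ} (hc : c ∉ w)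
    (h : w.filter (fun x => decide (x ∈ p)) = p.reverse) :
    (w ++ [c]).filter (fun x => decide (x ∈ p)) = p.reverse := by
  rw [List.filter_append, h]
  have : c ∉ p := fun hcp => hc (mem_of_inv h c hcp)
  simp [this]

lemma newtop {w : List ℕ} {p : List ℕ} {c : ℕ} (hc : c ∉ w)
    (h : w.filter (fun x => decide (x ∈ p)) = p.reverse) :
    (w ++ [c]).filter (fun x => decide (x ∈ c :: p)) = (c :: p).reverse := by
  rw [List.filter_append]
  have h1 : w.filter (fun x => decide (x ∈ c :: p)) = p.reverse := by
    rw [← h]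
    apply List.filter_congr
    intro x hx
    have : x ≠ c := fun he => hc (he ▸ hx)
    simp [this]
  rw [h1]; simp

lemma insert_step : ∀ (ps : List (List ℕ)) (c : ℕ) (w : List ℕ), c ∉ w →
    (∀ p ∈ ps, w.filter (fun x => decide (x ∈ p)) = p.reverse) →
    ∀ p ∈ PSinsert c ps, (w ++ [c]).filter (fun x => decide (x ∈ p)) = p.reverse
  | [], c, w, hc, hinv => by
      intro p hp
      simp only [PSinsert, List.mem_singleton] at hp
      subst hp
      have h0 : w.filter (fun x => decide (x ∈ ([c] : List ℕ))) = [] := by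
        apply List.filter_eq_nil_iff.mpr
        intro x hx
        simp only [List.mem_singleton, decide_eq_true_eq]
        exact fun he => hc (he ▸ hx)
      have := newtop (p := ([] : List ℕ)) hc (by simpa using h0)
      simpa using this
  | [] :: ps, c, w, hc, hinv => by
      intro p hp
      simp only [PSinsert, List.mem_cons] at hp
      rcases hp with rfl | hp
      · simp
      · exact insert_step ps c w hc (fun q hq => hinv q (List.mem_cons_of_mem _ hq)) p hp
  | (x :: q) :: ps, c, w, hc, hinv => by
      intro p hp
      have hxq := hinv (x :: q) List.mem_cons_self
      by_cases hlt : c < x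
      · simp only [PSinsert, if_pos hlt, List.mem_cons] at hp
        rcases hp with rfl | hp
        · exact newtop hc hxq
        · exact unchanged hc (hinv p (List.mem_cons_of_mem _ hp))
      · simp only [PSinsert, if_neg hlt, List.mem_cons] at hp
        rcases hp with rfl | hp
        · exact unchanged hc hxq
        · exact insert_step ps c w hc (fun r hr => hinv r (List.mem_cons_of_mem _ hr)) p hp

lemma piles_filter (w : List ℕ) (hw : w.Nodup) :
    ∀ p ∈ PSpiles w, w.filter (fun x => decide (x ∈ p)) = p.reverse := by
  induction w using List.reverseRecOn with
  | nil => simp [PSpiles]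
  | append_singleton w c ih =>
    have hc : c ∉ w := by
      simp only [List.nodup_append, List.nodup_singleton, List.disjoint_singleton] at hw
      exact fun h => hw.2.2 c h c (List.mem_singleton_self c) rfl
    have hw' : w.Nodup := (List.nodup_append'.mp hw).1
    have hps : PSpiles (w ++ [c]) = PSinsert c (PSpiles w) := by
      simp [PSpiles, List.foldl_append]
    rw [hps]
    exact insert_step _ c w hc (ih hw')

/-- For every permutation `σ` of `{1,…,n}`, applying `σ` entrywise to the
word `RPW(S'(σ))` (the concatenation of the recording piles, each written in increasing
order) yields the word `RPW(R(σ))`; i.e., `σ(RPW(S'(σ))(m)) = RPW(R(σ))(m)` for every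
position `m`, so `σ` has two-line notation with top row `RPW(S'(σ))` and bottom row
`RPW(R(σ))`. -/
theorem stmt11 (n : ℕ) (σ : Equiv.Perm (Fin n)) :
    ((Spiles (permWord σ)).flatten).map (fun i => (permWord σ).getD (i - 1) 0)
      = RPW (PSpiles (permWord σ)) := by
  have hnd : (permWord σ).Nodup := by
    rw [permWord]
    refine List.nodup_ofFn.mpr ?_
    intro i j h
    simp only [add_left_inj] at h
    exact σ.injective (Fin.val_injective h)
  rw [Spiles, RPW, List.map_flatten, List.map_map]
  congr 1
  apply List.map_congr_left
  intro p hp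
  simp only [Function.comp]
  rw [filter_map_aux (fun i => (permWord σ).getD (i - 1) 0) (fun y => decide (y ∈ p)),
    range'_map_getD]
  exact piles_filter _ hnd p hp
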